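/- Let w₀ : (0,∞) → ℝ be measurable with |∫₀^t w₀(s) s^α ds| ≤ C t^{(α-2m+1)/2} for all t > 0. Define iteratively w_k(r) = ∫_r^∞ t^{-α} ( ∫₀^t s^α w_{k-1}(s) ds ) dt for 1 ≤ k ≤ m. Then |w_k(r)| ≤ C' r^{-(α+2m+1-4k)/2} and |w_k'(r)| ≤ C' r^{-(α+2m+3-4k)/2} for all r > 0 and some constant C' depending on C, α, m. -/
import Mathlib


open MeasureTheory Set

/-- The iterated functions w_k:
w_0 = w0, w_{k+1}(r) = ∫_r^∞ t^{-α} ( ∫_0^t s^α w_k(s) ds ) dt. -/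
noncomputable def iterW (α : ℝ) (w0 : ℝ → ℝ) : ℕ → ℝ → ℝ
  | 0 => w0
  | (k + 1) => fun r =>
      ∫ t in Set.Ioi r, t ^ (-α) * ∫ s in Set.Ioo (0 : ℝ) t, s ^ α * iterW α w0 k s

/-- Core lemma: properties of `W r = ∫_{Ioi r} t^{-α} g t`. -/
lemma core_lemma (α D β : ℝ) (hD : 0 ≤ D) (hβ : β - α < -1)
    (g : ℝ → ℝ)
    (hgb : ∀ t : ℝ, 0 < t → |g t| ≤ D * t ^ β)
    (hgm : ∀ b : ℝ, 0 < b → AEStronglyMeasurable g (volume.restrict (Ioi b)))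
    (hgc : ∀ r : ℝ, 0 < r → ContinuousAt g r ∨ ∀ x, r < x → g x = 0) :
    (∀ r : ℝ, 0 < r → |∫ t in Ioi r, t ^ (-α) * g t| ≤ (D / (α - β - 1)) * r ^ (β - α + 1)) ∧
    (∀ r : ℝ, 0 < r →
      |deriv (fun u => ∫ t in Ioi u, t ^ (-α) * g t) r| ≤ D * r ^ (β - α)) ∧
    (∀ r : ℝ, 0 < r → ContinuousAt (fun u => ∫ t in Ioi u, t ^ (-α) * g t) r ∨
      ∀ x, r ≤ x → (∫ t in Ioi x, t ^ (-α) * g t) = 0) := by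
  set F : ℝ → ℝ := fun t => t ^ (-α) * g t with hF
  set W : ℝ → ℝ := fun u => ∫ t in Ioi u, F t with hWdef
  have hFb : ∀ t : ℝ, 0 < t → |F t| ≤ D * t ^ (β - α) := by
    intro t ht
    have h1 : |F t| = t ^ (-α) * |g t| := by
      rw [hF, abs_mul, abs_of_nonneg (Real.rpow_nonneg ht.le _)]
    rw [h1]
    calc t ^ (-α) * |g t| ≤ t ^ (-α) * (D * t ^ β) := by
          exact mul_le_mul_of_nonneg_left (hgb t ht) (Real.rpow_nonneg ht.le _)
      _ = D * t ^ (β - α) := by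
          rw [show β - α = -α + β by ring, Real.rpow_add ht]; ring
  have hFm : ∀ b : ℝ, 0 < b → AEStronglyMeasurable F (volume.restrict (Ioi b)) := by
    intro b hb
    have hrm : Measurable fun t : ℝ => t ^ (-α) := by measurability
    exact hrm.aestronglyMeasurable.mul (hgm b hb)
  have hFint : ∀ b : ℝ, 0 < b → IntegrableOn F (Ioi b) := by
    intro b hb
    refine ((integrableOn_Ioi_rpow_of_lt hβ hb).const_mul D).mono' (hFm b hb) ?_
    refine (ae_restrict_iff' measurableSet_Ioi).2 (Filter.Eventually.of_forall fun t ht => ?_)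
    rw [Real.norm_eq_abs]
    exact hFb t (hb.trans ht)
  have hW0 : ∀ r : ℝ, 0 < r → (∀ x, r < x → g x = 0) → ∀ x, r ≤ x → W x = 0 := by
    intro r hr h0 x hx
    have : ∫ t in Ioi x, F t = ∫ t in Ioi x, (0 : ℝ) := by
      refine setIntegral_congr_fun measurableSet_Ioi fun t ht => ?_
      rw [hF]; simp only []
      rw [h0 t (lt_of_le_of_lt hx ht), mul_zero]
    simpa using this
  have rep : ∀ b : ℝ, 0 < b → ∀ u, b ≤ u →
      W u = (∫ t in Ioi b, F t) - ∫ t in b..u, F t := by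
    intro b hb u hu
    rw [intervalIntegral.integral_of_le hu]
    have h1 := setIntegral_union (Set.Ioc_disjoint_Ioi le_rfl) measurableSet_Ioi
      ((hFint b hb).mono_set Set.Ioc_subset_Ioi_self)
      ((hFint b hb).mono_set (Set.Ioi_subset_Ioi hu)) (μ := volume) (f := F)
    rw [Set.Ioc_union_Ioi_eq_Ioi hu] at h1
    rw [hWdef]; simp only []
    linarith [h1]
  have key : ∀ r : ℝ, 0 < r → HasDerivAt W (-(F r)) r ∨ ∀ x, r ≤ x → W x = 0 := by
    intro r hr
    rcases hgc r hr with hc | h0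
    · left
      have hb : (0:ℝ) < r / 2 := by linarith
      have hFc : ContinuousAt F r :=
        (Real.continuousAt_rpow_const r (-α) (Or.inl hr.ne')).mul hc
      have hii : IntervalIntegrable F volume (r/2) r :=
        (intervalIntegrable_iff_integrableOn_Ioc_of_le (by linarith)).2
          ((hFint _ hb).mono_set Set.Ioc_subset_Ioi_self)
      have hsm : StronglyMeasurableAtFilter F (nhds r) volume :=
        ⟨Ioi (r/2), Ioi_mem_nhds (by linarith), hFm _ hb⟩
      have hftc := intervalIntegral.integral_hasDerivAt_right hii hsm hFc
      have hD2 := hftc.const_sub (∫ t in Ioi (r/2), F t)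
      refine hD2.congr_of_eventuallyEq ?_
      filter_upwards [Ioi_mem_nhds (show r/2 < r by linarith)] with u hu
      exact rep _ hb u (le_of_lt hu)
    · right; exact hW0 r hr h0
  refine ⟨?_, ?_, ?_⟩
  · intro r hr
    have hib : Integrable (fun t => D * t ^ (β - α)) (volume.restrict (Ioi r)) :=
      (integrableOn_Ioi_rpow_of_lt hβ hr).const_mul D
    have hle := norm_integral_le_of_norm_le hib
      ((ae_restrict_iff' measurableSet_Ioi).2 (Filter.Eventually.of_forall fun t ht => by
        rw [Real.norm_eq_abs]; exact hFb t (hr.trans ht)))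
    rw [Real.norm_eq_abs] at hle
    have hval : ∫ t in Ioi r, D * t ^ (β - α) = (D / (α - β - 1)) * r ^ (β - α + 1) := by
      rw [integral_const_mul, integral_Ioi_rpow_of_lt hβ hr]
      have h1 : β - α + 1 ≠ 0 := by linarith
      have h2 : α - β - 1 ≠ 0 := by intro h; apply h1; linarith
      field_simp
      ring
    rw [hval] at hle
    exact hle
  · intro r hr
    rcases key r hr with h | h
    · rw [h.deriv, abs_neg]
      exact hFb r hr
    · have h1 : HasDerivWithinAt W 0 (Ici r) r :=
        (hasDerivWithinAt_const r (Ici r) (0:ℝ)).congr (fun x hx => h x hx) (h r le_rfl)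
      have hpos : 0 ≤ D * r ^ (β - α) := mul_nonneg hD (Real.rpow_nonneg hr.le _)
      by_cases hd : DifferentiableAt ℝ W r
      · have h2 : HasDerivWithinAt W (deriv W r) (Ici r) r := hd.hasDerivAt.hasDerivWithinAt
        have e1 := h1.derivWithin (uniqueDiffOn_Ici r r Set.self_mem_Ici)
        have e2 := h2.derivWithin (uniqueDiffOn_Ici r r Set.self_mem_Ici)
        rw [e1] at e2
        rw [← e2]; simpa using hpos
      · rw [deriv_zero_of_not_differentiableAt hd]; simpa using hpos
  · intro r hr
    rcases key r hr with h | h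
    · exact Or.inl h.continuousAt
    · exact Or.inr h

/-- Step lemma: properties of `g t = ∫_{Ioo 0 t} s^α w s`. -/
lemma step_lemma (α D γ : ℝ) (hD : 0 ≤ D) (hγ : -1 < α + γ)
    (w : ℝ → ℝ)
    (hwb : ∀ r : ℝ, 0 < r → |w r| ≤ D * r ^ γ)
    (hwc : ∀ r : ℝ, 0 < r → ContinuousAt w r ∨ ∀ x, r ≤ x → w x = 0) :
    (∀ t : ℝ, 0 < t → |∫ s in Ioo (0:ℝ) t, s ^ α * w s| ≤ (D / (α + γ + 1)) * t ^ (α + γ + 1)) ∧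
    (∀ r : ℝ, 0 < r → ContinuousAt (fun t => ∫ s in Ioo (0:ℝ) t, s ^ α * w s) r) ∧
    (∀ b : ℝ, 0 < b →
      AEStronglyMeasurable (fun t => ∫ s in Ioo (0:ℝ) t, s ^ α * w s) (volume.restrict (Ioi b))) := by
  set f : ℝ → ℝ := fun s => s ^ α * w s with hf
  set g : ℝ → ℝ := fun t => ∫ s in Ioo (0:ℝ) t, f s with hg
  set B : Set ℝ := {r : ℝ | 0 < r ∧ ∀ x, r ≤ x → w x = 0} with hB
  have hBmeas : MeasurableSet B := Set.OrdConnected.measurableSet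
    ⟨fun x hx y _ z hz => ⟨hx.1.trans_le hz.1, fun t ht => hx.2 t (hz.1.trans ht)⟩⟩
  have hfm : ∀ s : Set ℝ, MeasurableSet s → s ⊆ Ioi 0 →
      AEStronglyMeasurable f (volume.restrict s) := by
    intro s hs hs0
    have hsplit : s = (s \ B) ∪ (s ∩ B) := by rw [Set.diff_union_inter]
    rw [hsplit, aestronglyMeasurable_union_iff]
    constructor
    · refine ContinuousOn.aestronglyMeasurable ?_ (hs.diff hBmeas)
      intro x hx
      have hx0 : 0 < x := hs0 hx.1
      have hcw : ContinuousAt w x := by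
        rcases hwc x hx0 with h | h
        · exact h
        · exact absurd ⟨hx0, h⟩ hx.2
      exact ((Real.continuousAt_rpow_const x α (Or.inl hx0.ne')).mul hcw).continuousWithinAt
    · refine (aestronglyMeasurable_const (b := (0:ℝ))).congr ?_
      filter_upwards [self_mem_ae_restrict (hs.inter hBmeas)] with x hx
      have : w x = 0 := hx.2.2 x le_rfl
      rw [hf]; simp only []
      rw [this, mul_zero]
  have hfb : ∀ s : ℝ, 0 < s → |f s| ≤ D * s ^ (α + γ) := by
    intro s hs
    have h1 : |f s| = s ^ α * |w s| := by
      rw [hf, abs_mul, abs_of_nonneg (Real.rpow_nonneg hs.le _)]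
    rw [h1]
    calc s ^ α * |w s| ≤ s ^ α * (D * s ^ γ) :=
          mul_le_mul_of_nonneg_left (hwb s hs) (Real.rpow_nonneg hs.le _)
      _ = D * s ^ (α + γ) := by rw [Real.rpow_add hs]; ring
  have hbi : ∀ t : ℝ, 0 < t → IntegrableOn (fun s : ℝ => D * s ^ (α + γ)) (Ioo 0 t) := by
    intro t ht
    have h1 := intervalIntegral.intervalIntegrable_rpow' (a := 0) (b := t) hγ
    rw [intervalIntegrable_iff_integrableOn_Ioo_of_le ht.le] at h1
    exact h1.const_mul D
  have hfi : ∀ t : ℝ, 0 < t → IntegrableOn f (Ioo 0 t) := by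
    intro t ht
    refine (hbi t ht).mono' (hfm _ measurableSet_Ioo fun x hx => hx.1) ?_
    refine (ae_restrict_iff' measurableSet_Ioo).2 (Filter.Eventually.of_forall fun s hs => ?_)
    rw [Real.norm_eq_abs]; exact hfb s hs.1
  have hval : ∀ t : ℝ, 0 < t →
      ∫ s in Ioo (0:ℝ) t, D * s ^ (α + γ) = (D / (α + γ + 1)) * t ^ (α + γ + 1) := by
    intro t ht
    rw [integral_const_mul, ← integral_Ioc_eq_integral_Ioo,
      ← intervalIntegral.integral_of_le ht.le, integral_rpow (Or.inl hγ),
      Real.zero_rpow (by linarith)]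
    rw [sub_zero]
    ring
  have hcont : ∀ r : ℝ, 0 < r → ContinuousAt g r := by
    intro r hr
    have hicc : IntegrableOn f (Icc 0 (r+1)) :=
      (hfi (r+1) (by linarith)).congr_set_ae Ioo_ae_eq_Icc.symm
    have hcg := intervalIntegral.continuousOn_primitive (μ := volume) hicc
    have heq : g = fun x => ∫ s in Ioc (0:ℝ) x, f s :=
      funext fun x => integral_Ioc_eq_integral_Ioo.symm
    rw [heq]
    exact hcg.continuousAt (Icc_mem_nhds hr (by linarith))
  refine ⟨?_, hcont, ?_⟩
  · intro t ht
    have hle := norm_integral_le_of_norm_le (hbi t ht)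
      ((ae_restrict_iff' measurableSet_Ioo).2 (Filter.Eventually.of_forall fun s hs => by
        rw [Real.norm_eq_abs]; exact hfb s hs.1))
    rw [Real.norm_eq_abs, hval t ht] at hle
    exact hle
  · intro b hb
    refine ContinuousOn.aestronglyMeasurable ?_ measurableSet_Ioi
    exact fun x hx => (hcont x (hb.trans hx)).continuousWithinAt

/-- Base lemma: measurability/continuity structure of `g₀ t = ∫_{Ioo 0 t} s^α w0 s`
without any integrability assumption. -/
lemma base_lemma (α : ℝ) (w0 : ℝ → ℝ) (hmeas : Measurable w0) :
    (∀ b : ℝ, 0 < b →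
      AEStronglyMeasurable (fun t => ∫ s in Ioo (0:ℝ) t, s ^ α * w0 s)
        (volume.restrict (Ioi b))) ∧
    (∀ r : ℝ, 0 < r → ContinuousAt (fun t => ∫ s in Ioo (0:ℝ) t, s ^ α * w0 s) r ∨
      ∀ x, r < x → (∫ s in Ioo (0:ℝ) x, s ^ α * w0 s) = 0) := by
  set f : ℝ → ℝ := fun s => s ^ α * w0 s with hf
  set g : ℝ → ℝ := fun t => ∫ s in Ioo (0:ℝ) t, f s with hg
  set G : Set ℝ := {t : ℝ | IntegrableOn f (Ioo 0 t)} with hG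
  have hGmono : ∀ {t u : ℝ}, t ∈ G → u ≤ t → u ∈ G :=
    fun ht hu => ht.mono_set (Set.Ioo_subset_Ioo le_rfl hu)
  have hGmeas : MeasurableSet G :=
    Set.OrdConnected.measurableSet ⟨fun x _ y hy z hz => hGmono hy hz.2⟩
  have gIoc : g = fun x => ∫ s in Ioc (0:ℝ) x, f s :=
    funext fun x => integral_Ioc_eq_integral_Ioo.symm
  have hg0 : ∀ t ∉ G, g t = 0 := fun t ht => integral_undef ht
  have hcG : ∀ r : ℝ, 0 < r → (∃ t, t ∈ G ∧ r < t) → ContinuousAt g r := by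
    rintro r hr ⟨t, htG, hrt⟩
    have hicc : IntegrableOn f (Icc 0 t) := htG.congr_set_ae Ioo_ae_eq_Icc.symm
    rw [gIoc]
    exact (intervalIntegral.continuousOn_primitive (μ := volume) hicc).continuousAt
      (Icc_mem_nhds hr hrt)
  constructor
  · intro b hb
    have hsplit : Ioi b = (Ioi b ∩ G) ∪ (Ioi b \ G) := (Set.inter_union_diff _ _).symm
    rw [hsplit, aestronglyMeasurable_union_iff]
    constructor
    · refine ContinuousOn.aestronglyMeasurable ?_ (measurableSet_Ioi.inter hGmeas)
      intro x hx
      by_cases h : ∃ t, t ∈ G ∧ x < t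
      · exact (hcG x (hb.trans hx.1) h).continuousWithinAt
      · have hsub : Ioi b ∩ G ⊆ Icc 0 x := by
          intro y hy
          refine ⟨(hb.trans hy.1).le, ?_⟩
          by_contra hyx
          exact h ⟨y, hy.2, not_le.1 hyx⟩
        have hicc : IntegrableOn f (Icc 0 x) := hx.2.congr_set_ae Ioo_ae_eq_Icc.symm
        rw [gIoc]
        exact ((intervalIntegral.continuousOn_primitive (μ := volume) hicc) x
          ⟨(hb.trans hx.1).le, le_rfl⟩).mono hsub
    · refine (aestronglyMeasurable_const (b := (0:ℝ))).congr ?_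
      filter_upwards [self_mem_ae_restrict (measurableSet_Ioi.diff hGmeas)] with x hx
      exact (hg0 x hx.2).symm
  · intro r hr
    by_cases h : ∃ t, t ∈ G ∧ r < t
    · exact Or.inl (hcG r hr h)
    · exact Or.inr fun x hx => hg0 x fun hxG => h ⟨x, hxG, hx⟩

theorem stmt_8 (m : ℕ) (hm : 1 ≤ m) (α : ℝ) (hα : -1 < α) (hS : α - 2 * m + 1 > 0)
    (w0 : ℝ → ℝ) (hmeas : Measurable w0) (C : ℝ)
    (hbound : ∀ t : ℝ, 0 < t →
      |∫ s in Set.Ioo (0 : ℝ) t, w0 s * s ^ α| ≤ C * t ^ ((α - 2 * m + 1) / 2)) :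
    ∃ C' : ℝ, ∀ k : ℕ, 1 ≤ k → k ≤ m → ∀ r : ℝ, 0 < r →
      |iterW α w0 k r| ≤ C' * r ^ (-((α + 2 * m + 1 - 4 * k) / 2)) ∧
      |deriv (iterW α w0 k) r| ≤ C' * r ^ (-((α + 2 * m + 3 - 4 * k) / 2)) := by
  have hm1 : (1:ℝ) ≤ (m:ℝ) := by exact_mod_cast hm
  have hα2m : 2 * (m:ℝ) - 1 < α := by linarith
  have hC : 0 ≤ C := by
    have h1 := hbound 1 one_pos
    have h2 : ((1:ℝ)) ^ ((α - 2 * m + 1) / 2) = 1 := Real.one_rpow _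
    rw [h2, mul_one] at h1
    exact (abs_nonneg _).trans h1
  have hbound' : ∀ t : ℝ, 0 < t →
      |∫ s in Set.Ioo (0 : ℝ) t, s ^ α * w0 s| ≤ C * t ^ ((α - 2 * (m:ℝ) + 1) / 2) := by
    intro t ht
    have heq : (∫ s in Set.Ioo (0 : ℝ) t, s ^ α * w0 s)
        = ∫ s in Set.Ioo (0 : ℝ) t, w0 s * s ^ α :=
      integral_congr_ae (Filter.Eventually.of_forall fun s => mul_comm _ _)
    rw [heq]
    exact hbound t ht
  -- main induction
  have main : ∀ k : ℕ, 1 ≤ k → k ≤ m → ∃ D : ℝ, 0 ≤ D ∧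
      (∀ r : ℝ, 0 < r →
        |iterW α w0 k r| ≤ D * r ^ (-((α + 2 * (m:ℝ) + 1 - 4 * (k:ℝ)) / 2)) ∧
        |deriv (iterW α w0 k) r| ≤ D * r ^ (-((α + 2 * (m:ℝ) + 3 - 4 * (k:ℝ)) / 2))) ∧
      (∀ r : ℝ, 0 < r → ContinuousAt (iterW α w0 k) r ∨
        ∀ x, r ≤ x → iterW α w0 k x = 0) := by
    intro k
    induction k with
    | zero => intro h; omega
    | succ k ih =>
      intro _ hkm
      by_cases hk0 : k = 0
      · -- base case : k+1 = 1
        subst hk0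
        obtain ⟨Hm, Hc⟩ := base_lemma α w0 hmeas
        set β₀ : ℝ := (α - 2 * (m:ℝ) + 1) / 2 with hβ₀
        have hβα : β₀ - α < -1 := by
          rw [hβ₀]; linarith
        obtain ⟨h1, h2, h3⟩ := core_lemma α C β₀ hC hβα
          (fun t => ∫ s in Set.Ioo (0 : ℝ) t, s ^ α * w0 s) hbound' Hm Hc
        have hiter : iterW α w0 1 =
            fun u => ∫ t in Ioi u, t ^ (-α) * ∫ s in Set.Ioo (0 : ℝ) t, s ^ α * w0 s := rfl
        have he1 : β₀ - α + 1 = -((α + 2 * (m:ℝ) + 1 - 4 * ((1:ℕ):ℝ)) / 2) := by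
          rw [hβ₀]; push_cast; ring
        have he2 : β₀ - α = -((α + 2 * (m:ℝ) + 3 - 4 * ((1:ℕ):ℝ)) / 2) := by
          rw [hβ₀]; push_cast; ring
        refine ⟨C / (α - β₀ - 1) + C, ?_, ?_, ?_⟩
        · have : 0 < α - β₀ - 1 := by linarith
          positivity
        · intro r hr
          constructor
          · rw [hiter, ← he1]
            refine (h1 r hr).trans ?_
            refine mul_le_mul_of_nonneg_right ?_ (Real.rpow_nonneg hr.le _)
            linarith
          · rw [hiter, ← he2]
            refine (h2 r hr).trans ?_
            refine mul_le_mul_of_nonneg_right ?_ (Real.rpow_nonneg hr.le _)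
            have : 0 < α - β₀ - 1 := by linarith
            have : 0 ≤ C / (α - β₀ - 1) := by positivity
            linarith
        · intro r hr
          rw [hiter]
          exact h3 r hr
      · -- inductive step: k ≥ 1
        have hk1 : 1 ≤ k := Nat.one_le_iff_ne_zero.2 hk0
        have hkr : (1:ℝ) ≤ (k:ℝ) := by exact_mod_cast hk1
        have hkmr : (k:ℝ) + 1 ≤ (m:ℝ) := by exact_mod_cast hkm
        obtain ⟨D, hD0, hbnds, hWc⟩ := ih hk1 (by omega)
        set γ : ℝ := -((α + 2 * (m:ℝ) + 1 - 4 * (k:ℝ)) / 2) with hγdef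
        have hγ : -1 < α + γ := by rw [hγdef]; linarith
        obtain ⟨hg1, hg2, hg3⟩ := step_lemma α D γ hD0 hγ (iterW α w0 k)
          (fun r hr => (hbnds r hr).1) hWc
        set β : ℝ := α + γ + 1 with hβdef
        have hβα : β - α < -1 := by
          rw [hβdef, hγdef]; linarith
        have hD'0 : 0 ≤ D / (α + γ + 1) := by
          have : 0 < α + γ + 1 := by linarith
          positivity
        have hg1' : ∀ t : ℝ, 0 < t →
            |∫ s in Set.Ioo (0 : ℝ) t, s ^ α * iterW α w0 k s|
              ≤ (D / (α + γ + 1)) * t ^ β := by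
          intro t ht; rw [hβdef]; exact hg1 t ht
        obtain ⟨h1, h2, h3⟩ := core_lemma α (D / (α + γ + 1)) β hD'0 hβα
          (fun t => ∫ s in Set.Ioo (0 : ℝ) t, s ^ α * iterW α w0 k s) hg1' hg3
          (fun r hr => Or.inl (hg2 r hr))
        have hiter : iterW α w0 (k+1) =
            fun u => ∫ t in Ioi u,
              t ^ (-α) * ∫ s in Set.Ioo (0 : ℝ) t, s ^ α * iterW α w0 k s := rfl
        have he1 : β - α + 1 = -((α + 2 * (m:ℝ) + 1 - 4 * ((k+1:ℕ):ℝ)) / 2) := by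
          rw [hβdef, hγdef]; push_cast; ring
        have he2 : β - α = -((α + 2 * (m:ℝ) + 3 - 4 * ((k+1:ℕ):ℝ)) / 2) := by
          rw [hβdef, hγdef]; push_cast; ring
        have hden : 0 < α - β - 1 := by linarith
        refine ⟨D / (α + γ + 1) / (α - β - 1) + D / (α + γ + 1), by positivity, ?_, ?_⟩
        · intro r hr
          constructor
          · rw [hiter, ← he1]
            refine (h1 r hr).trans ?_
            refine mul_le_mul_of_nonneg_right ?_ (Real.rpow_nonneg hr.le _)
            linarith
          · rw [hiter, ← he2]
            refine (h2 r hr).trans ?_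
            refine mul_le_mul_of_nonneg_right ?_ (Real.rpow_nonneg hr.le _)
            have : 0 ≤ D / (α + γ + 1) / (α - β - 1) := by positivity
            linarith
        · intro r hr
          rw [hiter]
          exact h3 r hr
  -- assemble a single constant
  have hex : ∀ k : ℕ, ∃ D : ℝ, 0 ≤ D ∧ (1 ≤ k → k ≤ m → ∀ r : ℝ, 0 < r →
      |iterW α w0 k r| ≤ D * r ^ (-((α + 2 * (m:ℝ) + 1 - 4 * (k:ℝ)) / 2)) ∧
      |deriv (iterW α w0 k) r| ≤ D * r ^ (-((α + 2 * (m:ℝ) + 3 - 4 * (k:ℝ)) / 2))) := by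
    intro k
    by_cases h : 1 ≤ k ∧ k ≤ m
    · obtain ⟨D, hD0, hb, _⟩ := main k h.1 h.2
      exact ⟨D, hD0, fun _ _ => hb⟩
    · exact ⟨0, le_rfl, fun h1 h2 => absurd ⟨h1, h2⟩ h⟩
  choose D hD0 hDb using hex
  refine ⟨∑ j ∈ Finset.range (m+1), D j, fun k hk1 hkm r hr => ?_⟩
  obtain ⟨hb1, hb2⟩ := hDb k hk1 hkm r hr
  have hle : D k ≤ ∑ j ∈ Finset.range (m+1), D j :=
    Finset.single_le_sum (fun i _ => hD0 i) (Finset.mem_range.2 (by omega))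
  constructor
  · exact hb1.trans (mul_le_mul_of_nonneg_right hle (Real.rpow_nonneg hr.le _))
  · exact hb2.trans (mul_le_mul_of_nonneg_right hle (Real.rpow_nonneg hr.le _))
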